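/- Let S = k[x_0, …, x_n, y_0, …, y_n] with the bigrading deg(x_i) = (1,0), deg(y_i) = (0,1), and let h_1, …, h_n be the binomials h_i = x_{i−1}y_{i−1} − x_i y_i. Then h_1, …, h_n form a regular sequence in S. -/

import Mathlib

open MvPolynomial

noncomputable section CremonaAux

namespace CremonaAux

lemma aux_X_regular {B : Type*} [CommRing B] (q : Polynomial B)
    (h : Polynomial.X * q = 0) : q = 0 := by
  ext n
  have := congrArg (fun p => Polynomial.coeff p (n+1)) h
  simpa [Polynomial.coeff_X_mul] using this

lemma aux_linear_regular {B : Type*} [CommRing B] {b : B}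
    (hb : ∀ x, b * x = 0 → x = 0) (a : B) (q : Polynomial B)
    (h : (Polynomial.C a - Polynomial.C b * Polynomial.X) * q = 0) : q = 0 := by
  by_contra hq
  have hb0 : b ≠ 0 := by
    intro h0
    have h1 : (1 : B) = 0 := hb 1 (by simp [h0])
    have : Subsingleton B := subsingleton_of_zero_eq_one h1.symm
    exact hq (Subsingleton.elim _ _)
  have hp : (Polynomial.C a - Polynomial.C b * Polynomial.X) =
      Polynomial.C (-b) * Polynomial.X + Polynomial.C a := by
    simp [map_neg]; ring
  have hdeg : (Polynomial.C a - Polynomial.C b * Polynomial.X).natDegree = 1 := by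
    rw [hp]; exact Polynomial.natDegree_linear (neg_ne_zero.mpr hb0)
  have hlc : (Polynomial.C a - Polynomial.C b * Polynomial.X).leadingCoeff = -b := by
    rw [hp]; exact Polynomial.leadingCoeff_linear (neg_ne_zero.mpr hb0)
  have hcoeff := Polynomial.coeff_mul_degree_add_degree
    (Polynomial.C a - Polynomial.C b * Polynomial.X) q
  rw [h, hdeg, hlc] at hcoeff
  have hzero : b * q.leadingCoeff = 0 := by
    have := hcoeff.symm
    simpa [neg_mul] using congrArg Neg.neg this
  exact hq (Polynomial.leadingCoeff_eq_zero.mp (hb _ hzero))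

lemma aux_mem_iff {A : Type*} [CommRing A] (J : Ideal A) (f : Polynomial (Polynomial A)) :
    f ∈ Ideal.map (Polynomial.C : Polynomial A →+* Polynomial (Polynomial A))
        (Ideal.map (Polynomial.C : A →+* Polynomial A) J) ↔
      f.map (Polynomial.mapRingHom (Ideal.Quotient.mk J)) = 0 := by
  rw [Ideal.mem_map_C_iff]
  constructor
  · intro h
    ext m n
    have := (Ideal.mem_map_C_iff).mp (h m) n
    simpa [Polynomial.coeff_map, Ideal.Quotient.eq_zero_iff_mem] using this
  · intro h m
    rw [Ideal.mem_map_C_iff]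
    intro n
    have := congrArg (fun p => (p.coeff m).coeff n) h
    simpa [Polynomial.coeff_map, Ideal.Quotient.eq_zero_iff_mem] using this

lemma aux_key {A : Type*} [CommRing A] (J : Ideal A) (z : A) (q : Polynomial (Polynomial A))
    (h : (Polynomial.C (Polynomial.C z) - Polynomial.C Polynomial.X * Polynomial.X) * q ∈
        Ideal.map (Polynomial.C : Polynomial A →+* Polynomial (Polynomial A))
          (Ideal.map (Polynomial.C : A →+* Polynomial A) J)) :
    q ∈ Ideal.map (Polynomial.C : Polynomial A →+* Polynomial (Polynomial A))
        (Ideal.map (Polynomial.C : A →+* Polynomial A) J) := by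
  rw [aux_mem_iff] at h ⊢
  rw [Polynomial.map_mul] at h
  have hp : (Polynomial.C (Polynomial.C z) - Polynomial.C Polynomial.X * Polynomial.X).map
        (Polynomial.mapRingHom (Ideal.Quotient.mk J)) =
      Polynomial.C (Polynomial.C (Ideal.Quotient.mk J z)) -
        Polynomial.C Polynomial.X * Polynomial.X := by
    simp [Polynomial.map_sub, Polynomial.map_mul]
  rw [hp] at h
  exact aux_linear_regular (b := (Polynomial.X : Polynomial (A ⧸ J)))
    (fun x hx => aux_X_regular _ hx) _ _ h

variable {k : Type*} [CommRing k] {σ : Type*} [DecidableEq σ]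

/-- The equivalence splitting off two distinct elements. -/
def splitEquiv (u v : σ) (huv : u ≠ v) :
    σ ≃ Unit ⊕ Unit ⊕ {w : σ // w ≠ u ∧ w ≠ v} where
  toFun w :=
    if hv : w = v then Sum.inl ()
    else if hu : w = u then Sum.inr (Sum.inl ())
    else Sum.inr (Sum.inr ⟨w, hu, hv⟩)
  invFun s := match s with
    | .inl _ => v
    | .inr (.inl _) => u
    | .inr (.inr t) => t.1
  left_inv w := by
    by_cases hv : w = v
    · simp [hv]
    · by_cases hu : w = u <;> simp [hv, hu, huv]
  right_inv s := by
    rcases s with _ | (_ | t)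
    · simp
    · simp [huv.symm, huv]
    · simp [t.2.1, t.2.2]

def splitAlgEquiv (u v : σ) (huv : u ≠ v) :
    MvPolynomial σ k ≃ₐ[k] (Polynomial (Polynomial (MvPolynomial {w : σ // w ≠ u ∧ w ≠ v} k))) :=
  (renameEquiv k (splitEquiv u v huv)).trans <|
    (sumAlgEquiv k Unit (Unit ⊕ {w : σ // w ≠ u ∧ w ≠ v})).trans <|
      (mapAlgEquiv Unit ((sumAlgEquiv k Unit {w : σ // w ≠ u ∧ w ≠ v}).trans
        ((pUnitAlgEquiv (MvPolynomial {w : σ // w ≠ u ∧ w ≠ v} k)).restrictScalars k))).trans <|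
        (pUnitAlgEquiv (Polynomial (MvPolynomial {w : σ // w ≠ u ∧ w ≠ v} k))).restrictScalars k

variable (u v : σ) (huv : u ≠ v)

lemma splitAlgEquiv_X_v : splitAlgEquiv (k := k) u v huv (X v) = Polynomial.X := by
  simp [splitAlgEquiv, splitEquiv]

lemma splitAlgEquiv_X_u :
    splitAlgEquiv (k := k) u v huv (X u) = Polynomial.C Polynomial.X := by
  have h1 : splitEquiv u v huv u = Sum.inr (Sum.inl ()) := by
    simp [splitEquiv, huv]
  simp [splitAlgEquiv, h1]

lemma splitAlgEquiv_rename (g : MvPolynomial {w : σ // w ≠ u ∧ w ≠ v} k) :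
    splitAlgEquiv u v huv (rename Subtype.val g) = Polynomial.C (Polynomial.C g) := by
  have : (splitAlgEquiv (k := k) u v huv).toAlgHom.comp (rename Subtype.val)
      = (Polynomial.CAlgHom.comp Polynomial.CAlgHom :
          MvPolynomial {w : σ // w ≠ u ∧ w ≠ v} k →ₐ[k] _) := by
    apply MvPolynomial.algHom_ext
    intro t
    simp [splitAlgEquiv, splitEquiv, t.2.1, t.2.2, Polynomial.CAlgHom]
  exact congrArg (fun f => f g) (congrArg DFunLike.coe this)

attribute [irreducible] splitAlgEquiv


lemma mem_map_split (hne : u ≠ v) (K : Ideal (MvPolynomial σ k)) (p : MvPolynomial σ k) :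
    p ∈ K ↔ (splitAlgEquiv u v hne).toRingEquiv p ∈
      K.map (splitAlgEquiv (k := k) u v hne).toRingEquiv :=
  (Ideal.apply_mem_of_equiv_iff (f := (splitAlgEquiv (k := k) u v hne).toRingEquiv)).symm

lemma map_split_span (hne : u ≠ v) (G : Set (MvPolynomial {w : σ // w ≠ u ∧ w ≠ v} k)) :
    (Ideal.span ((rename (Subtype.val) : _ →ₐ[k] MvPolynomial σ k) '' G)).map
        (splitAlgEquiv (k := k) u v hne).toRingEquiv =
      Ideal.map (Polynomial.C)
        (Ideal.map (Polynomial.C : MvPolynomial {w : σ // w ≠ u ∧ w ≠ v} k →+*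
            Polynomial (MvPolynomial {w : σ // w ≠ u ∧ w ≠ v} k)) (Ideal.span G)) := by
  rw [Ideal.map_span, ← Set.image_comp, Ideal.map_span, Ideal.map_span, ← Set.image_comp]
  congr 1
  apply Set.image_congr
  intro g _
  exact splitAlgEquiv_rename u v hne g

lemma main_colon (hne : u ≠ v) (G : Set (MvPolynomial {w : σ // w ≠ u ∧ w ≠ v} k))
    (z : MvPolynomial {w : σ // w ≠ u ∧ w ≠ v} k) (f : MvPolynomial σ k)
    (h : (rename Subtype.val z - X u * X v) * f ∈
        Ideal.span ((rename (Subtype.val) : _ →ₐ[k] MvPolynomial σ k) '' G)) :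
    f ∈ Ideal.span ((rename (Subtype.val) : _ →ₐ[k] MvPolynomial σ k) '' G) := by
  rw [mem_map_split u v hne _ f, map_split_span u v hne G]
  rw [mem_map_split u v hne _ _, map_split_span u v hne G] at h
  rw [map_mul, map_sub, map_mul] at h
  have e1 : (splitAlgEquiv (k := k) u v hne).toRingEquiv (rename Subtype.val z)
      = Polynomial.C (Polynomial.C z) := splitAlgEquiv_rename u v hne z
  have e2 : (splitAlgEquiv (k := k) u v hne).toRingEquiv (X u)
      = Polynomial.C Polynomial.X := splitAlgEquiv_X_u u v hne
  have e3 : (splitAlgEquiv (k := k) u v hne).toRingEquiv (X v)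
      = Polynomial.X := splitAlgEquiv_X_v u v hne
  rw [e1, e2, e3] at h
  exact aux_key (Ideal.span G) z _ h

lemma isSMulRegular_of_colon {S : Type*} [CommRing S] (I : Ideal S) (r : S)
    (h : ∀ f, r * f ∈ I → f ∈ I) :
    IsSMulRegular (S ⧸ (I • ⊤ : Submodule S S)) r := by
  have hI : (I • ⊤ : Submodule S S) = I := by
    rw [Ideal.smul_eq_mul, Ideal.mul_top]
  rw [hI]
  intro a b hab
  obtain ⟨x, rfl⟩ := Submodule.Quotient.mk_surjective I a
  obtain ⟨y, rfl⟩ := Submodule.Quotient.mk_surjective I b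
  simp only [← Submodule.Quotient.mk_smul] at hab
  rw [Submodule.Quotient.eq] at hab
  rw [Submodule.Quotient.eq]
  refine h _ ?_
  rw [mul_sub]
  simpa [smul_eq_mul] using hab

end CremonaAux

section Cremona

variable (k : Type*) [CommRing k] {n : ℕ}

/-- The generators of the prefix ideal, as polynomials avoiding the two split variables. -/
def gpoly (i : Fin n) (j : {j : Fin n // (j : ℕ) < (i : ℕ)}) :
    MvPolynomial {w : Fin (n+1) ⊕ Fin (n+1) //
      w ≠ Sum.inl i.succ ∧ w ≠ Sum.inr i.succ} k :=
  X ⟨Sum.inl j.1.castSucc, by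
      have := j.2
      constructor <;> simp [Fin.ext_iff] <;> omega⟩ *
  X ⟨Sum.inr j.1.castSucc, by
      have := j.2
      constructor <;> simp [Fin.ext_iff] <;> omega⟩ -
  X ⟨Sum.inl j.1.succ, by
      have := j.2
      constructor <;> simp [Fin.ext_iff] <;> omega⟩ *
  X ⟨Sum.inr j.1.succ, by
      have := j.2
      constructor <;> simp [Fin.ext_iff] <;> omega⟩

def zpoly (i : Fin n) :
    MvPolynomial {w : Fin (n+1) ⊕ Fin (n+1) //
      w ≠ Sum.inl i.succ ∧ w ≠ Sum.inr i.succ} k :=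
  X ⟨Sum.inl i.castSucc, by constructor <;> simp [Fin.ext_iff]⟩ *
  X ⟨Sum.inr i.castSucc, by constructor <;> simp [Fin.ext_iff]⟩

lemma rename_gpoly (i : Fin n) (j : {j : Fin n // (j : ℕ) < (i : ℕ)}) :
    rename Subtype.val (gpoly k i j) =
      X (Sum.inl j.1.castSucc) * X (Sum.inr j.1.castSucc)
        - X (Sum.inl j.1.succ) * X (Sum.inr j.1.succ) := by
  simp [gpoly]

lemma rename_zpoly (i : Fin n) :
    rename Subtype.val (zpoly k i) =
      X (Sum.inl i.castSucc) * X (Sum.inr i.castSucc) := by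
  simp [zpoly]

end Cremona

end CremonaAux

open CremonaAux in
/-- In `S = k[x_0, …, x_n, y_0, …, y_n]`, the binomials
`h_i = x_{i-1} y_{i-1} - x_i y_i` (`i = 1, …, n`) form a regular sequence.
The `x`-variables are indexed by `Sum.inl`, the `y`-variables by `Sum.inr`. -/
theorem standard_cremona_graph_regular_sequence
    (k : Type*) [Field k] (n : ℕ) (hn : 1 ≤ n) :
    RingTheory.Sequence.IsRegular (MvPolynomial (Fin (n + 1) ⊕ Fin (n + 1)) k)
      (List.ofFn fun i : Fin n =>
        (X (Sum.inl i.castSucc) * X (Sum.inr i.castSucc)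
          - X (Sum.inl i.succ) * X (Sum.inr i.succ) :
            MvPolynomial (Fin (n + 1) ⊕ Fin (n + 1)) k)) := by
  classical
  refine ⟨⟨fun i hi => ?_⟩, ?_⟩
  · -- weak regularity at step i
    simp only [List.length_ofFn] at hi
    have hgi : (List.ofFn fun i : Fin n =>
        (X (Sum.inl i.castSucc) * X (Sum.inr i.castSucc)
          - X (Sum.inl i.succ) * X (Sum.inr i.succ) :
            MvPolynomial (Fin (n + 1) ⊕ Fin (n + 1)) k))[i] =
        X (Sum.inl (⟨i, hi⟩ : Fin n).castSucc) * X (Sum.inr (⟨i, hi⟩ : Fin n).castSucc)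
          - X (Sum.inl (⟨i, hi⟩ : Fin n).succ) * X (Sum.inr (⟨i, hi⟩ : Fin n).succ) := by
      rw [List.getElem_ofFn]
    rw [hgi]
    set ii : Fin n := ⟨i, hi⟩ with hii
    have SEq : {x | x ∈ (List.ofFn fun i : Fin n =>
        (X (Sum.inl i.castSucc) * X (Sum.inr i.castSucc)
          - X (Sum.inl i.succ) * X (Sum.inr i.succ) :
            MvPolynomial (Fin (n + 1) ⊕ Fin (n + 1)) k)).take i} =
        (rename (Subtype.val) : _ →ₐ[k] MvPolynomial (Fin (n+1) ⊕ Fin (n+1)) k) ''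
          Set.range (gpoly k ii) := by
      ext x
      simp only [Set.mem_setOf_eq, Set.mem_image, Set.mem_range]
      constructor
      · intro hx
        obtain ⟨j, hjlen, hjx⟩ := List.mem_iff_getElem.mp hx
        simp only [List.length_take, List.length_ofFn, lt_min_iff] at hjlen
        refine ⟨gpoly k ii ⟨⟨j, hjlen.2⟩, hjlen.1⟩, ⟨_, rfl⟩, ?_⟩
        rw [rename_gpoly]
        rw [← hjx, List.getElem_take, List.getElem_ofFn]
      · rintro ⟨g, ⟨j, rfl⟩, rfl⟩
        rw [rename_gpoly]
        refine List.mem_iff_getElem.mpr ⟨(j.1 : ℕ), ?_, ?_⟩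
        · simp only [List.length_take, List.length_ofFn, lt_min_iff]
          exact ⟨j.2, j.1.isLt⟩
        · rw [List.getElem_take, List.getElem_ofFn]
    have hEq : Ideal.ofList ((List.ofFn fun i : Fin n =>
        (X (Sum.inl i.castSucc) * X (Sum.inr i.castSucc)
          - X (Sum.inl i.succ) * X (Sum.inr i.succ) :
            MvPolynomial (Fin (n + 1) ⊕ Fin (n + 1)) k)).take i) =
        Ideal.span ((rename (Subtype.val) : _ →ₐ[k] MvPolynomial (Fin (n+1) ⊕ Fin (n+1)) k) ''
          Set.range (gpoly k ii)) := congrArg Ideal.span SEq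
    rw [hEq]
    apply isSMulRegular_of_colon
    intro f hf
    have hz : (X (Sum.inl ii.castSucc) * X (Sum.inr ii.castSucc)
          - X (Sum.inl ii.succ) * X (Sum.inr ii.succ) :
            MvPolynomial (Fin (n + 1) ⊕ Fin (n + 1)) k) =
        rename Subtype.val (zpoly k ii) - X (Sum.inl ii.succ) * X (Sum.inr ii.succ) := by
      rw [rename_zpoly]
    rw [hz] at hf
    exact main_colon (Sum.inl ii.succ) (Sum.inr ii.succ) (by simp)
      (Set.range (gpoly k ii)) (zpoly k ii) f hf
  · -- nontriviality
    intro heq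
    have h1 : (1 : MvPolynomial (Fin (n+1) ⊕ Fin (n+1)) k) ∈
        Ideal.ofList (List.ofFn fun i : Fin n =>
        (X (Sum.inl i.castSucc) * X (Sum.inr i.castSucc)
          - X (Sum.inl i.succ) * X (Sum.inr i.succ) :
            MvPolynomial (Fin (n + 1) ⊕ Fin (n + 1)) k)) • (⊤ : Submodule (MvPolynomial (Fin (n+1) ⊕ Fin (n+1)) k) (MvPolynomial (Fin (n+1) ⊕ Fin (n+1)) k)) := by
      rw [← heq]; exact Submodule.mem_top
    rw [Ideal.smul_eq_mul, Ideal.mul_top] at h1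
    have hle : Ideal.ofList (List.ofFn fun i : Fin n =>
        (X (Sum.inl i.castSucc) * X (Sum.inr i.castSucc)
          - X (Sum.inl i.succ) * X (Sum.inr i.succ) :
            MvPolynomial (Fin (n + 1) ⊕ Fin (n + 1)) k)) ≤
        RingHom.ker (constantCoeff : MvPolynomial (Fin (n+1) ⊕ Fin (n+1)) k →+* k) := by
      refine Ideal.span_le.mpr ?_
      rintro x hx
      obtain ⟨j, rfl⟩ := List.mem_ofFn.mp hx
      simp [RingHom.mem_ker]
    have := hle h1
    rw [RingHom.mem_ker, map_one] at this
    exact one_ne_zero this
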